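/- Let F, G ∈ k[X,Y] such that det Jac(F,G) ∈ k*. Then the system F(𝒰(t),𝒱(t)) = tX+(1-t)F(X,Y), G(𝒰(t),𝒱(t)) = tY+(1-t)G(X,Y) with initial conditions 𝒰(0)=X, 𝒱(0)=Y has a unique solution 𝒰(t), 𝒱(t) in the formal power series ring k[X,Y][[t]]. -/

import Mathlib

open MvPolynomial

section Taylor
variable {k : Type*} [CommRing k] {S : Type*} [CommRing S] [Algebra k S]

lemma stmt4_diff_dvd (d : S) {u v u' v' : S} (hx : d ∣ u - u') (hy : d ∣ v - v')
    (P : MvPolynomial (Fin 2) k) :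
    d ∣ aeval ![u, v] P - aeval ![u', v'] P := by
  induction P using MvPolynomial.induction_on with
  | C a => simp
  | add p q hp hq =>
      simp only [map_add]
      rw [add_sub_add_comm]
      exact dvd_add hp hq
  | mul_X p n hp =>
      have hw : d ∣ ![u, v] n - ![u', v'] n := by
        fin_cases n
        · simpa using hx
        · simpa using hy
      simp only [map_mul, aeval_X]
      have key : aeval ![u, v] p * ![u, v] n - aeval ![u', v'] p * ![u', v'] n
          = aeval ![u, v] p * (![u, v] n - ![u', v'] n)
            + (aeval ![u, v] p - aeval ![u', v'] p) * ![u', v'] n := by ring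
      rw [key]
      exact dvd_add (hw.mul_left _) (hp.mul_right _)

lemma stmt4_taylor (d : S) {u v u' v' : S} (hx : d ∣ u - u') (hy : d ∣ v - v')
    (P : MvPolynomial (Fin 2) k) :
    d ^ 2 ∣ aeval ![u, v] P - aeval ![u', v'] P
      - aeval ![u', v'] (pderiv 0 P) * (u - u') - aeval ![u', v'] (pderiv 1 P) * (v - v') := by
  induction P using MvPolynomial.induction_on with
  | C a => simp
  | add p q hp hq =>
      simp only [map_add]
      have key : ∀ a b a' b' D0 E0 D1 E1 : S,
          a + b - (a' + b') - (D0 + E0) * (u - u') - (D1 + E1) * (v - v')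
          = (a - a' - D0 * (u - u') - D1 * (v - v'))
            + (b - b' - E0 * (u - u') - E1 * (v - v')) := by intros; ring
      rw [key]
      exact dvd_add hp hq
  | mul_X p n hp =>
      have hw : d ∣ ![u, v] n - ![u', v'] n := by
        fin_cases n
        · simpa using hx
        · simpa using hy
      have hE : (![u, v] n - ![u', v'] n)
          - aeval ![u', v'] (pderiv 0 (X n : MvPolynomial (Fin 2) k)) * (u - u')
          - aeval ![u', v'] (pderiv 1 (X n : MvPolynomial (Fin 2) k)) * (v - v') = 0 := by
        fin_cases n <;>
          simp [pderiv_X_self, pderiv_X_of_ne, Fin.ext_iff]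
      simp only [map_mul, map_add, aeval_X, pderiv_mul]
      have key : aeval ![u, v] p * ![u, v] n - aeval ![u', v'] p * ![u', v'] n
          - (aeval ![u', v'] (pderiv 0 p) * ![u', v'] n
              + aeval ![u', v'] p * aeval ![u', v'] (pderiv 0 (X n : MvPolynomial (Fin 2) k)))
                * (u - u')
          - (aeval ![u', v'] (pderiv 1 p) * ![u', v'] n
              + aeval ![u', v'] p * aeval ![u', v'] (pderiv 1 (X n : MvPolynomial (Fin 2) k)))
                * (v - v')
          = ![u', v'] n * (aeval ![u, v] p - aeval ![u', v'] p
              - aeval ![u', v'] (pderiv 0 p) * (u - u') - aeval ![u', v'] (pderiv 1 p) * (v - v'))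
            + (aeval ![u, v] p - aeval ![u', v'] p) * (![u, v] n - ![u', v'] n)
            + aeval ![u', v'] p * ((![u, v] n - ![u', v'] n)
              - aeval ![u', v'] (pderiv 0 (X n : MvPolynomial (Fin 2) k)) * (u - u')
              - aeval ![u', v'] (pderiv 1 (X n : MvPolynomial (Fin 2) k)) * (v - v')) := by
        ring
      rw [key, hE, mul_zero, add_zero]
      refine dvd_add (hp.mul_left _) ?_
      rw [pow_two]
      exact mul_dvd_mul (stmt4_diff_dvd d hx hy p) hw

end Taylor

section PS
variable {k : Type*} [CommRing k] {A : Type*} [CommRing A] [Algebra k A]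

/-- `constantCoeff` as a `k`-algebra hom. -/
noncomputable def stmt4_ccHom (k A : Type*) [CommRing k] [CommRing A] [Algebra k A] :
    PowerSeries A →ₐ[k] A :=
  { (PowerSeries.constantCoeff (R := A)) with
    commutes' := fun r => by
      simp [PowerSeries.algebraMap_apply] }

/-- `PowerSeries.C` as a `k`-algebra hom. -/
noncomputable def stmt4_CHom (k A : Type*) [CommRing k] [CommRing A] [Algebra k A] :
    A →ₐ[k] PowerSeries A :=
  { (PowerSeries.C (R := A)) with
    commutes' := fun r => by
      simp [PowerSeries.algebraMap_apply] }

lemma stmt4_cc_aeval (u v : PowerSeries A) (P : MvPolynomial (Fin 2) k) :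
    PowerSeries.constantCoeff (aeval ![u, v] P)
      = aeval ![PowerSeries.constantCoeff u, PowerSeries.constantCoeff v] P := by
  have h := comp_aeval_apply (stmt4_ccHom k A) P (f := ![u, v])
  have h2 : (fun i => stmt4_ccHom k A (![u, v] i))
      = ![PowerSeries.constantCoeff u, PowerSeries.constantCoeff v] := by
    funext i; fin_cases i <;> rfl
  rw [h2] at h
  exact h

lemma stmt4_C_aeval (a b : A) (P : MvPolynomial (Fin 2) k) :
    aeval ![PowerSeries.C a, PowerSeries.C b] P = PowerSeries.C (aeval ![a, b] P) := by
  have h := comp_aeval_apply (stmt4_CHom k A) P (f := ![a, b])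
  have h2 : (fun i => stmt4_CHom k A (![a, b] i)) = ![PowerSeries.C a, PowerSeries.C b] := by
    funext i; fin_cases i <;> rfl
  rw [h2] at h
  exact h.symm

lemma stmt4_zero_of_dvd {f : PowerSeries A} (h : ∀ n : ℕ, (PowerSeries.X : PowerSeries A) ^ n ∣ f) :
    f = 0 := by
  ext m
  have := (PowerSeries.X_pow_dvd_iff.mp (h (m + 1))) m (Nat.lt_succ_self m)
  simpa using this

end PS

section Eval
variable {k : Type*} [CommRing k]

lemma stmt4_aeval_XX (P : MvPolynomial (Fin 2) k) :
    aeval ![(X 0 : MvPolynomial (Fin 2) k), X 1] P = P := by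
  have : ![(X 0 : MvPolynomial (Fin 2) k), X 1] = X := by
    funext i; fin_cases i <;> rfl
  rw [this, aeval_X_left_apply]

end Eval

section Main
variable {k : Type*} [Field k]

/-- The target series `tX_i + (1-t)F`. -/
noncomputable def stmt4_Tgt (F : MvPolynomial (Fin 2) k) (i : Fin 2) :
    PowerSeries (MvPolynomial (Fin 2) k) :=
  PowerSeries.X * PowerSeries.C (X i) + (1 - PowerSeries.X) * PowerSeries.C F

/-- The Newton step: one approximation improves to the next order. -/
lemma stmt4_step (H : MvPolynomial (Fin 2) k) (i : Fin 2)
    (u' v' : PowerSeries (MvPolynomial (Fin 2) k)) (e1 e2 : MvPolynomial (Fin 2) k) (n : ℕ)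
    (hcc1 : PowerSeries.constantCoeff u' = X 0)
    (hcc2 : PowerSeries.constantCoeff v' = X 1)
    (hD : (PowerSeries.X : PowerSeries (MvPolynomial (Fin 2) k)) ^ (n + 1) ∣
      stmt4_Tgt H i - aeval ![u', v'] H)
    (hd : pderiv 0 H * e1 + pderiv 1 H * e2
      = PowerSeries.coeff (n + 1) (stmt4_Tgt H i - aeval ![u', v'] H)) :
    (PowerSeries.X : PowerSeries (MvPolynomial (Fin 2) k)) ^ (n + 2) ∣
      stmt4_Tgt H i - aeval ![u' + PowerSeries.C e1 * PowerSeries.X ^ (n + 1),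
        v' + PowerSeries.C e2 * PowerSeries.X ^ (n + 1)] H := by
  set d : MvPolynomial (Fin 2) k := PowerSeries.coeff (n + 1) (stmt4_Tgt H i - aeval ![u', v'] H) with hd_def
  obtain ⟨h, hh⟩ := hD
  have hd0 : d = PowerSeries.constantCoeff h := by
    rw [hd_def, hh, mul_comm]
    simpa using PowerSeries.coeff_mul_X_pow h (n + 1) 0
  -- Step A
  have hXh : (PowerSeries.X : PowerSeries (MvPolynomial (Fin 2) k)) ∣ h - PowerSeries.C d := by
    rw [PowerSeries.X_dvd_iff, map_sub, PowerSeries.constantCoeff_C, hd0, sub_self]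
  have hA : (PowerSeries.X : PowerSeries (MvPolynomial (Fin 2) k)) ^ (n + 2) ∣
      (stmt4_Tgt H i - aeval ![u', v'] H) - PowerSeries.C d * PowerSeries.X ^ (n + 1) := by
    rw [hh, show (PowerSeries.X : PowerSeries (MvPolynomial (Fin 2) k)) ^ (n+1) * h - PowerSeries.C d * PowerSeries.X ^ (n+1)
      = PowerSeries.X ^ (n+1) * (h - PowerSeries.C d) from by ring, pow_succ]
    exact mul_dvd_mul dvd_rfl hXh
  -- Step B : Taylor
  have hx : (PowerSeries.X : PowerSeries (MvPolynomial (Fin 2) k)) ^ (n+1) ∣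
      (u' + PowerSeries.C e1 * PowerSeries.X ^ (n + 1)) - u' := by
    rw [add_sub_cancel_left]; exact dvd_mul_left _ _
  have hy : (PowerSeries.X : PowerSeries (MvPolynomial (Fin 2) k)) ^ (n+1) ∣
      (v' + PowerSeries.C e2 * PowerSeries.X ^ (n + 1)) - v' := by
    rw [add_sub_cancel_left]; exact dvd_mul_left _ _
  have hT := stmt4_taylor ((PowerSeries.X : PowerSeries (MvPolynomial (Fin 2) k)) ^ (n+1)) hx hy H
  simp only [add_sub_cancel_left] at hT
  have hB := dvd_trans
    (show (PowerSeries.X : PowerSeries (MvPolynomial (Fin 2) k)) ^ (n+2) ∣ ((PowerSeries.X : PowerSeries (MvPolynomial (Fin 2) k)) ^ (n+1)) ^ 2 from by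
      rw [← pow_mul]; exact pow_dvd_pow _ (by omega)) hT
  -- Step C
  have hP : ∀ j : Fin 2, (PowerSeries.X : PowerSeries (MvPolynomial (Fin 2) k)) ∣
      aeval ![u', v'] (pderiv j H) - PowerSeries.C (pderiv j H) := by
    intro j
    rw [PowerSeries.X_dvd_iff, map_sub, PowerSeries.constantCoeff_C, stmt4_cc_aeval,
      hcc1, hcc2, stmt4_aeval_XX, sub_self]
  have hC : ∀ (j : Fin 2) (e : MvPolynomial (Fin 2) k), (PowerSeries.X : PowerSeries (MvPolynomial (Fin 2) k)) ^ (n+2) ∣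
      (aeval ![u', v'] (pderiv j H) - PowerSeries.C (pderiv j H))
        * (PowerSeries.C e * PowerSeries.X ^ (n+1)) := by
    intro j e
    rw [pow_succ']
    exact mul_dvd_mul (hP j) (dvd_mul_left _ _)
  -- Step D
  have hzero : PowerSeries.C (pderiv 0 H) * PowerSeries.C e1
      + PowerSeries.C (pderiv 1 H) * PowerSeries.C e2 - PowerSeries.C d = 0 := by
    rw [← map_mul, ← map_mul, ← map_add, ← map_sub, hd, sub_self, map_zero]
  have key : stmt4_Tgt H i - aeval ![u' + PowerSeries.C e1 * PowerSeries.X ^ (n + 1),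
        v' + PowerSeries.C e2 * PowerSeries.X ^ (n + 1)] H
      = ((stmt4_Tgt H i - aeval ![u', v'] H) - PowerSeries.C d * PowerSeries.X ^ (n + 1))
        - (aeval ![u' + PowerSeries.C e1 * PowerSeries.X ^ (n + 1),
            v' + PowerSeries.C e2 * PowerSeries.X ^ (n + 1)] H
          - aeval ![u', v'] H
          - aeval ![u', v'] (pderiv 0 H) * (PowerSeries.C e1 * PowerSeries.X ^ (n + 1))
          - aeval ![u', v'] (pderiv 1 H) * (PowerSeries.C e2 * PowerSeries.X ^ (n + 1)))
        - (aeval ![u', v'] (pderiv 0 H) - PowerSeries.C (pderiv 0 H))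
            * (PowerSeries.C e1 * PowerSeries.X ^ (n + 1))
        - (aeval ![u', v'] (pderiv 1 H) - PowerSeries.C (pderiv 1 H))
            * (PowerSeries.C e2 * PowerSeries.X ^ (n + 1))
        - (PowerSeries.C (pderiv 0 H) * PowerSeries.C e1
            + PowerSeries.C (pderiv 1 H) * PowerSeries.C e2 - PowerSeries.C d)
            * PowerSeries.X ^ (n + 1) := by
    ring
  rw [key]
  refine dvd_sub (dvd_sub (dvd_sub (dvd_sub hA hB) (hC 0 e1)) (hC 1 e2)) ?_
  rw [hzero, zero_mul]
  exact dvd_zero _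


/-- Defect coefficient. -/
noncomputable def stmt4_d (H : MvPolynomial (Fin 2) k) (i : Fin 2)
    (W : PowerSeries (MvPolynomial (Fin 2) k) × PowerSeries (MvPolynomial (Fin 2) k)) (n : ℕ) :
    MvPolynomial (Fin 2) k :=
  PowerSeries.coeff n (stmt4_Tgt H i - aeval ![W.1, W.2] H)

/-- Newton approximation sequence. -/
noncomputable def stmt4_W (F G : MvPolynomial (Fin 2) k) (c : k) :
    ℕ → PowerSeries (MvPolynomial (Fin 2) k) × PowerSeries (MvPolynomial (Fin 2) k)
  | 0 => (PowerSeries.C (X 0), PowerSeries.C (X 1))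
  | n + 1 =>
    ((stmt4_W F G c n).1 + PowerSeries.C
        (c⁻¹ • (pderiv 1 G * stmt4_d F 0 (stmt4_W F G c n) (n + 1)
          - pderiv 1 F * stmt4_d G 1 (stmt4_W F G c n) (n + 1))) * PowerSeries.X ^ (n + 1),
     (stmt4_W F G c n).2 + PowerSeries.C
        (c⁻¹ • (pderiv 0 F * stmt4_d G 1 (stmt4_W F G c n) (n + 1)
          - pderiv 0 G * stmt4_d F 0 (stmt4_W F G c n) (n + 1))) * PowerSeries.X ^ (n + 1))

lemma stmt4_W_spec {F G : MvPolynomial (Fin 2) k} {c : k} (hc : c ≠ 0)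
    (hdet : pderiv 0 F * pderiv 1 G - pderiv 1 F * pderiv 0 G = C c) (n : ℕ) :
    PowerSeries.constantCoeff (stmt4_W F G c n).1 = X 0 ∧
    PowerSeries.constantCoeff (stmt4_W F G c n).2 = X 1 ∧
    ((PowerSeries.X : PowerSeries (MvPolynomial (Fin 2) k)) ^ (n + 1) ∣
      stmt4_Tgt F 0 - aeval ![(stmt4_W F G c n).1, (stmt4_W F G c n).2] F) ∧
    ((PowerSeries.X : PowerSeries (MvPolynomial (Fin 2) k)) ^ (n + 1) ∣
      stmt4_Tgt G 1 - aeval ![(stmt4_W F G c n).1, (stmt4_W F G c n).2] G) := by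
  induction n with
  | zero =>
      refine ⟨by simp [stmt4_W], by simp [stmt4_W], ?_, ?_⟩
      · show (PowerSeries.X : PowerSeries (MvPolynomial (Fin 2) k)) ^ (0 + 1) ∣
          stmt4_Tgt F 0 - aeval ![PowerSeries.C (X 0), PowerSeries.C (X 1)] F
        rw [stmt4_C_aeval, stmt4_aeval_XX, pow_one,
          show stmt4_Tgt F 0 - PowerSeries.C F
            = PowerSeries.X * (PowerSeries.C (X 0) - PowerSeries.C F) from by
              rw [stmt4_Tgt]; ring]
        exact dvd_mul_right _ _
      · show (PowerSeries.X : PowerSeries (MvPolynomial (Fin 2) k)) ^ (0 + 1) ∣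
          stmt4_Tgt G 1 - aeval ![PowerSeries.C (X 0), PowerSeries.C (X 1)] G
        rw [stmt4_C_aeval, stmt4_aeval_XX, pow_one,
          show stmt4_Tgt G 1 - PowerSeries.C G
            = PowerSeries.X * (PowerSeries.C (X 1) - PowerSeries.C G) from by
              rw [stmt4_Tgt]; ring]
        exact dvd_mul_right _ _
  | succ n ih =>
      obtain ⟨h1, h2, h3, h4⟩ := ih
      set e1 : MvPolynomial (Fin 2) k :=
        c⁻¹ • (pderiv 1 G * stmt4_d F 0 (stmt4_W F G c n) (n + 1)
          - pderiv 1 F * stmt4_d G 1 (stmt4_W F G c n) (n + 1)) with he1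
      set e2 : MvPolynomial (Fin 2) k :=
        c⁻¹ • (pderiv 0 F * stmt4_d G 1 (stmt4_W F G c n) (n + 1)
          - pderiv 0 G * stmt4_d F 0 (stmt4_W F G c n) (n + 1)) with he2
      have hWsucc : stmt4_W F G c (n + 1)
          = ((stmt4_W F G c n).1 + PowerSeries.C e1 * PowerSeries.X ^ (n + 1),
             (stmt4_W F G c n).2 + PowerSeries.C e2 * PowerSeries.X ^ (n + 1)) := by
        rw [stmt4_W]
      have hdF : pderiv 0 F * e1 + pderiv 1 F * e2
          = stmt4_d F 0 (stmt4_W F G c n) (n + 1) := by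
        rw [he1, he2, mul_smul_comm, mul_smul_comm, ← smul_add,
          show pderiv 0 F * (pderiv 1 G * stmt4_d F 0 (stmt4_W F G c n) (n + 1)
                - pderiv 1 F * stmt4_d G 1 (stmt4_W F G c n) (n + 1))
              + pderiv 1 F * (pderiv 0 F * stmt4_d G 1 (stmt4_W F G c n) (n + 1)
                - pderiv 0 G * stmt4_d F 0 (stmt4_W F G c n) (n + 1))
            = (pderiv 0 F * pderiv 1 G - pderiv 1 F * pderiv 0 G)
                * stmt4_d F 0 (stmt4_W F G c n) (n + 1) from by ring,
          hdet, ← smul_eq_C_mul, smul_smul, inv_mul_cancel₀ hc, one_smul]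
      have hdG : pderiv 0 G * e1 + pderiv 1 G * e2
          = stmt4_d G 1 (stmt4_W F G c n) (n + 1) := by
        rw [he1, he2, mul_smul_comm, mul_smul_comm, ← smul_add,
          show pderiv 0 G * (pderiv 1 G * stmt4_d F 0 (stmt4_W F G c n) (n + 1)
                - pderiv 1 F * stmt4_d G 1 (stmt4_W F G c n) (n + 1))
              + pderiv 1 G * (pderiv 0 F * stmt4_d G 1 (stmt4_W F G c n) (n + 1)
                - pderiv 0 G * stmt4_d F 0 (stmt4_W F G c n) (n + 1))
            = (pderiv 0 F * pderiv 1 G - pderiv 1 F * pderiv 0 G)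
                * stmt4_d G 1 (stmt4_W F G c n) (n + 1) from by ring,
          hdet, ← smul_eq_C_mul, smul_smul, inv_mul_cancel₀ hc, one_smul]
      rw [hWsucc]
      refine ⟨by simp [h1], by simp [h2], ?_, ?_⟩
      · exact stmt4_step F 0 _ _ e1 e2 n h1 h2 h3 hdF
      · exact stmt4_step G 1 _ _ e1 e2 n h1 h2 h4 hdG


lemma stmt4_W_stable (F G : MvPolynomial (Fin 2) k) (c : k) {m n : ℕ} (h : m ≤ n) :
    PowerSeries.coeff m (stmt4_W F G c n).1 = PowerSeries.coeff m (stmt4_W F G c m).1 ∧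
    PowerSeries.coeff m (stmt4_W F G c n).2 = PowerSeries.coeff m (stmt4_W F G c m).2 := by
  induction n with
  | zero =>
      have : m = 0 := Nat.le_zero.mp h
      subst this; exact ⟨rfl, rfl⟩
  | succ n ih =>
      by_cases hm : m ≤ n
      · have hne : m ≠ n + 1 := by omega
        constructor <;>
        · rw [stmt4_W]
          simp [PowerSeries.coeff_C_mul, PowerSeries.coeff_X_pow, hne, (ih hm).1, (ih hm).2]
      · have : m = n + 1 := by omega
        subst this; exact ⟨rfl, rfl⟩

lemma stmt4_unique {F G : MvPolynomial (Fin 2) k} {c : k} (hc : c ≠ 0)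
    (hdet : pderiv 0 F * pderiv 1 G - pderiv 1 F * pderiv 0 G = C c)
    {U V U' V' : PowerSeries (MvPolynomial (Fin 2) k)}
    (hF : aeval ![U, V] F = stmt4_Tgt F 0) (hG : aeval ![U, V] G = stmt4_Tgt G 1)
    (hF' : aeval ![U', V'] F = stmt4_Tgt F 0) (hG' : aeval ![U', V'] G = stmt4_Tgt G 1)
    (hU0 : PowerSeries.constantCoeff U = X 0) (hV0 : PowerSeries.constantCoeff V = X 1)
    (hU0' : PowerSeries.constantCoeff U' = X 0)
    (hV0' : PowerSeries.constantCoeff V' = X 1) :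
    U = U' ∧ V = V' := by
  have main : ∀ n : ℕ,
      ((PowerSeries.X : PowerSeries (MvPolynomial (Fin 2) k)) ^ (n + 1) ∣ U - U') ∧
      ((PowerSeries.X : PowerSeries (MvPolynomial (Fin 2) k)) ^ (n + 1) ∣ V - V') := by
    intro n
    induction n with
    | zero =>
        constructor <;>
          rw [pow_one, PowerSeries.X_dvd_iff, map_sub] <;>
          simp [hU0, hU0', hV0, hV0']
    | succ n ih =>
        have hpow : (PowerSeries.X : PowerSeries (MvPolynomial (Fin 2) k)) ^ (n + 2) ∣
            ((PowerSeries.X : PowerSeries (MvPolynomial (Fin 2) k)) ^ (n + 1)) ^ 2 := by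
          rw [← pow_mul]; exact pow_dvd_pow _ (by omega)
        have eF : (PowerSeries.X : PowerSeries (MvPolynomial (Fin 2) k)) ^ (n + 2) ∣
            aeval ![U', V'] (pderiv 0 F) * (U - U')
              + aeval ![U', V'] (pderiv 1 F) * (V - V') := by
          have hT := hpow.trans (stmt4_taylor _ ih.1 ih.2 F)
          rw [hF, hF',
            show stmt4_Tgt F 0 - stmt4_Tgt F 0
                - aeval ![U', V'] (pderiv 0 F) * (U - U')
                - aeval ![U', V'] (pderiv 1 F) * (V - V')
              = -(aeval ![U', V'] (pderiv 0 F) * (U - U')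
                + aeval ![U', V'] (pderiv 1 F) * (V - V')) from by ring, dvd_neg] at hT
          exact hT
        have eG : (PowerSeries.X : PowerSeries (MvPolynomial (Fin 2) k)) ^ (n + 2) ∣
            aeval ![U', V'] (pderiv 0 G) * (U - U')
              + aeval ![U', V'] (pderiv 1 G) * (V - V') := by
          have hT := hpow.trans (stmt4_taylor _ ih.1 ih.2 G)
          rw [hG, hG',
            show stmt4_Tgt G 1 - stmt4_Tgt G 1
                - aeval ![U', V'] (pderiv 0 G) * (U - U')
                - aeval ![U', V'] (pderiv 1 G) * (V - V')
              = -(aeval ![U', V'] (pderiv 0 G) * (U - U')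
                + aeval ![U', V'] (pderiv 1 G) * (V - V')) from by ring, dvd_neg] at hT
          exact hT
        have hdetS : aeval ![U', V'] (pderiv 0 F) * aeval ![U', V'] (pderiv 1 G)
            - aeval ![U', V'] (pderiv 1 F) * aeval ![U', V'] (pderiv 0 G)
            = algebraMap k (PowerSeries (MvPolynomial (Fin 2) k)) c := by
          rw [← map_mul, ← map_mul, ← map_sub, hdet, aeval_C]
        have cancel : ∀ w : PowerSeries (MvPolynomial (Fin 2) k),
            (PowerSeries.X : PowerSeries (MvPolynomial (Fin 2) k)) ^ (n + 2) ∣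
              algebraMap k (PowerSeries (MvPolynomial (Fin 2) k)) c * w →
            (PowerSeries.X : PowerSeries (MvPolynomial (Fin 2) k)) ^ (n + 2) ∣ w := by
          intro w hw
          have : w = algebraMap k (PowerSeries (MvPolynomial (Fin 2) k)) c⁻¹
              * (algebraMap k (PowerSeries (MvPolynomial (Fin 2) k)) c * w) := by
            rw [← mul_assoc, ← map_mul, inv_mul_cancel₀ hc, map_one, one_mul]
          rw [this]; exact hw.mul_left _
        constructor
        · refine cancel _ ?_
          rw [show algebraMap k (PowerSeries (MvPolynomial (Fin 2) k)) c * (U - U')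
              = aeval ![U', V'] (pderiv 1 G)
                  * (aeval ![U', V'] (pderiv 0 F) * (U - U')
                    + aeval ![U', V'] (pderiv 1 F) * (V - V'))
                - aeval ![U', V'] (pderiv 1 F)
                  * (aeval ![U', V'] (pderiv 0 G) * (U - U')
                    + aeval ![U', V'] (pderiv 1 G) * (V - V')) from by
            rw [← hdetS]; ring]
          exact dvd_sub (eF.mul_left _) (eG.mul_left _)
        · refine cancel _ ?_
          rw [show algebraMap k (PowerSeries (MvPolynomial (Fin 2) k)) c * (V - V')
              = aeval ![U', V'] (pderiv 0 F)
                  * (aeval ![U', V'] (pderiv 0 G) * (U - U')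
                    + aeval ![U', V'] (pderiv 1 G) * (V - V'))
                - aeval ![U', V'] (pderiv 0 G)
                  * (aeval ![U', V'] (pderiv 0 F) * (U - U')
                    + aeval ![U', V'] (pderiv 1 F) * (V - V')) from by
            rw [← hdetS]; ring]
          exact dvd_sub (eG.mul_left _) (eF.mul_left _)
  constructor
  · have := stmt4_zero_of_dvd (f := U - U')
      (fun n => (pow_dvd_pow (PowerSeries.X (R := MvPolynomial (Fin 2) k)) (Nat.le_succ n)).trans
        (main n).1)
    exact sub_eq_zero.mp this
  · have := stmt4_zero_of_dvd (f := V - V')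
      (fun n => (pow_dvd_pow (PowerSeries.X (R := MvPolynomial (Fin 2) k)) (Nat.le_succ n)).trans
        (main n).2)
    exact sub_eq_zero.mp this

end Main

/-- If `det Jac(F,G)` is a nonzero constant, the system
`F(𝒰,𝒱) = tX+(1-t)F`, `G(𝒰,𝒱) = tY+(1-t)G` with `𝒰(0)=X`, `𝒱(0)=Y`
has a unique solution in `k[X,Y][[t]]`. -/
theorem stmt4 (k : Type*) [Field k] [CharZero k]
    (F G : MvPolynomial (Fin 2) k)
    (hJ : ∃ c : k, c ≠ 0 ∧
      Matrix.det !![pderiv 0 F, pderiv 1 F; pderiv 0 G, pderiv 1 G] = C c) :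
    ∃! UV : PowerSeries (MvPolynomial (Fin 2) k) × PowerSeries (MvPolynomial (Fin 2) k),
      aeval ![UV.1, UV.2] F =
          PowerSeries.X * PowerSeries.C (X 0) + (1 - PowerSeries.X) * PowerSeries.C F ∧
      aeval ![UV.1, UV.2] G =
          PowerSeries.X * PowerSeries.C (X 1) + (1 - PowerSeries.X) * PowerSeries.C G ∧
      PowerSeries.constantCoeff UV.1 = X 0 ∧
      PowerSeries.constantCoeff UV.2 = X 1 := by
  obtain ⟨c, hc, hdetM⟩ := hJ
  rw [Matrix.det_fin_two_of] at hdetM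
  set U : PowerSeries (MvPolynomial (Fin 2) k) :=
    PowerSeries.mk fun m => PowerSeries.coeff m (stmt4_W F G c m).1 with hUdef
  set V : PowerSeries (MvPolynomial (Fin 2) k) :=
    PowerSeries.mk fun m => PowerSeries.coeff m (stmt4_W F G c m).2 with hVdef
  have hU : ∀ n : ℕ, (PowerSeries.X : PowerSeries (MvPolynomial (Fin 2) k)) ^ (n + 1) ∣
      U - (stmt4_W F G c n).1 := by
    intro n
    rw [PowerSeries.X_pow_dvd_iff]
    intro m hm
    rw [map_sub, hUdef, PowerSeries.coeff_mk, (stmt4_W_stable F G c (Nat.lt_succ_iff.mp hm)).1,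
      sub_self]
  have hV : ∀ n : ℕ, (PowerSeries.X : PowerSeries (MvPolynomial (Fin 2) k)) ^ (n + 1) ∣
      V - (stmt4_W F G c n).2 := by
    intro n
    rw [PowerSeries.X_pow_dvd_iff]
    intro m hm
    rw [map_sub, hVdef, PowerSeries.coeff_mk, (stmt4_W_stable F G c (Nat.lt_succ_iff.mp hm)).2,
      sub_self]
  have hsolve : ∀ (H : MvPolynomial (Fin 2) k) (i : Fin 2),
      (∀ n : ℕ, (PowerSeries.X : PowerSeries (MvPolynomial (Fin 2) k)) ^ (n + 1) ∣
        stmt4_Tgt H i - aeval ![(stmt4_W F G c n).1, (stmt4_W F G c n).2] H) →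
      aeval ![U, V] H = stmt4_Tgt H i := by
    intro H i hinv
    have key : ∀ n : ℕ, (PowerSeries.X : PowerSeries (MvPolynomial (Fin 2) k)) ^ (n + 1) ∣
        stmt4_Tgt H i - aeval ![U, V] H := by
      intro n
      have hdiff := stmt4_diff_dvd ((PowerSeries.X :
        PowerSeries (MvPolynomial (Fin 2) k)) ^ (n + 1)) (hU n) (hV n) H
      rw [show stmt4_Tgt H i - aeval ![U, V] H
          = (stmt4_Tgt H i - aeval ![(stmt4_W F G c n).1, (stmt4_W F G c n).2] H)
            - (aeval ![U, V] H - aeval ![(stmt4_W F G c n).1, (stmt4_W F G c n).2] H) from by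
        ring]
      exact dvd_sub (hinv n) hdiff
    have := stmt4_zero_of_dvd (f := stmt4_Tgt H i - aeval ![U, V] H)
      (fun n => (pow_dvd_pow _ (Nat.le_succ n)).trans (key n))
    exact (sub_eq_zero.mp this).symm
  have hF : aeval ![U, V] F = stmt4_Tgt F 0 :=
    hsolve F 0 (fun n => (stmt4_W_spec hc hdetM n).2.2.1)
  have hG : aeval ![U, V] G = stmt4_Tgt G 1 :=
    hsolve G 1 (fun n => (stmt4_W_spec hc hdetM n).2.2.2)
  have hccU : PowerSeries.constantCoeff U = X 0 := by
    rw [hUdef, ← PowerSeries.coeff_zero_eq_constantCoeff_apply, PowerSeries.coeff_mk]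
    simp [stmt4_W]
  have hccV : PowerSeries.constantCoeff V = X 1 := by
    rw [hVdef, ← PowerSeries.coeff_zero_eq_constantCoeff_apply, PowerSeries.coeff_mk]
    simp [stmt4_W]
  refine ⟨(U, V), ⟨hF, hG, hccU, hccV⟩, ?_⟩
  rintro ⟨U', V'⟩ ⟨h1, h2, h3, h4⟩
  obtain ⟨hu, hv⟩ := stmt4_unique hc hdetM h1 h2 hF hG h3 h4 hccU hccV
  exact Prod.ext hu hv
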